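/- Fix m ≥ 2 and n ≥ 2, and consider n-run OofA designs on m components with no replicated runs. Let D* be such a design maximizing k_min, write k* = k_min(D*), and suppose that among all such designs attaining k_min = k*, D* minimizes ν_{k*}. Then for every n-run design D with distinct runs satisfying either k_min(D) < k*, or k_min(D) = k* and ν_{k*}(D) > ν_{k*}(D*), there exists θ₀ > 0 such that det Σ_{D*}(θ) > det Σ_D(θ) for all θ ≥ θ₀. -/
import Mathlib


/-- A run (addition order) on `m` components: position `r` receives component `x r`.
The position map `π_x` is `x.symm`. -/
abbrev Run (m : ℕ) := Equiv.Perm (Fin m)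

/-- Kendall tau distance between two runs. -/
def kendall {m : ℕ} (x y : Run m) : ℕ :=
  (Finset.univ.filter fun p : Fin m × Fin m =>
    p.1 < p.2 ∧
      (((x.symm p.1 : ℕ) : ℤ) - ((x.symm p.2 : ℕ) : ℤ)) *
        (((y.symm p.1 : ℕ) : ℤ) - ((y.symm p.2 : ℕ) : ℤ)) < 0).card

/-- Minimum pairwise Kendall tau distance of a design. -/
noncomputable def kmin {m n : ℕ} (D : Fin n → Run m) : ℕ :=
  sInf {v : ℕ | ∃ i j : Fin n, i < j ∧ kendall (D i) (D j) = v}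

/-- `ν_r(D)`: the number of pairs `i < j` with `k(x_i, x_j) = r`. -/
def nuDist {m n : ℕ} (D : Fin n → Run m) (r : ℕ) : ℕ :=
  (Finset.univ.filter fun p : Fin n × Fin n =>
    p.1 < p.2 ∧ kendall (D p.1) (D p.2) = r).card

/-- The Mallows-kernel correlation matrix `Σ_D(θ)` with entries `exp(−θ k(x_i,x_j))`. -/
noncomputable def SigmaMat {m n : ℕ} (D : Fin n → Run m) (θ : ℝ) :
    Matrix (Fin n) (Fin n) ℝ :=
  fun i j => Real.exp (-θ * (kendall (D i) (D j) : ℝ))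

lemma kendall_comm {m : ℕ} (x y : Run m) : kendall x y = kendall y x := by
  unfold kendall; congr 1; apply Finset.filter_congr; intro p _; rw [mul_comm]

lemma kendall_self {m : ℕ} (x : Run m) : kendall x x = 0 := by
  rw [kendall, Finset.card_eq_zero, Finset.filter_eq_empty_iff]
  rintro p - ⟨-, h2⟩
  exact absurd h2 (not_lt.2 (mul_self_nonneg _))

lemma eq_of_kendall_eq_zero {m : ℕ} (x y : Run m) (h : kendall x y = 0) : x = y := by
  have hpair : ∀ a b : Fin m, a < b →
      0 ≤ (((x.symm a : ℕ) : ℤ) - ((x.symm b : ℕ) : ℤ)) *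
        (((y.symm a : ℕ) : ℤ) - ((y.symm b : ℕ) : ℤ)) := by
    intro a b hab
    by_contra hneg
    rw [kendall, Finset.card_eq_zero, Finset.filter_eq_empty_iff] at h
    exact h (Finset.mem_univ (a, b)) ⟨hab, lt_of_not_ge hneg⟩
  have hmono : StrictMono ⇑(x.trans y.symm) := by
    intro r s hrs
    set a := x r with ha
    set b := x s with hb
    have hab : a ≠ b := fun hh => absurd (x.injective hh) (ne_of_lt hrs)
    have hxa : x.symm a = r := x.symm_apply_apply r
    have hxb : x.symm b = s := x.symm_apply_apply s
    simp only [Equiv.trans_apply, ← ha, ← hb]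
    have hyab : y.symm a ≠ y.symm b := fun hh => hab (y.symm.injective hh)
    have hyab' : ((y.symm a : ℕ) : ℤ) ≠ ((y.symm b : ℕ) : ℤ) := by
      simpa [Fin.val_injective.eq_iff] using hyab
    have hrs' : ((r : ℕ) : ℤ) < ((s : ℕ) : ℤ) := by exact_mod_cast hrs
    rcases hab.lt_or_gt with hlt | hlt
    · have := hpair a b hlt
      rw [hxa, hxb] at this
      have h2 : ((y.symm a : ℕ) : ℤ) < ((y.symm b : ℕ) : ℤ) := by
        rcases hyab'.lt_or_gt with h2 | h2
        · exact h2
        · exfalso; nlinarith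
      exact_mod_cast h2
    · have := hpair b a hlt
      rw [hxa, hxb] at this
      have h2 : ((y.symm a : ℕ) : ℤ) < ((y.symm b : ℕ) : ℤ) := by
        rcases hyab'.lt_or_gt with h2 | h2
        · exact h2
        · exfalso; nlinarith
      exact_mod_cast h2
  have hiso : ∀ r : Fin m, (x.trans y.symm) r = r := by
    have hu := Subsingleton.elim
      (StrictMono.orderIsoOfSurjective _ hmono (x.trans y.symm).surjective)
      (OrderIso.refl (Fin m))
    intro r
    have := congrArg (fun f => f r) (congrArg (fun (e : Fin m ≃o Fin m) => ⇑e) hu)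
    simpa using this
  apply Equiv.ext
  intro r
  have h1 := hiso r
  simp only [Equiv.trans_apply] at h1
  have h2 := congrArg y h1
  rwa [Equiv.apply_symm_apply] at h2

lemma kendall_pos {m : ℕ} {x y : Run m} (h : x ≠ y) : 1 ≤ kendall x y :=
  Nat.one_le_iff_ne_zero.2 fun h0 => h (eq_of_kendall_eq_zero x y h0)

lemma kmin_le {m n : ℕ} (D : Fin n → Run m) {i j : Fin n} (h : i ≠ j) :
    kmin D ≤ kendall (D i) (D j) := by
  rcases h.lt_or_gt with h | h
  · exact Nat.sInf_le ⟨i, j, h, rfl⟩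
  · rw [kendall_comm]; exact Nat.sInf_le ⟨j, i, h, rfl⟩

lemma kmin_mem {m n : ℕ} (hn : 2 ≤ n) (D : Fin n → Run m) :
    ∃ i j : Fin n, i < j ∧ kendall (D i) (D j) = kmin D := by
  have hne : {v : ℕ | ∃ i j : Fin n, i < j ∧ kendall (D i) (D j) = v}.Nonempty := by
    refine ⟨_, ⟨⟨0, by omega⟩, ⟨1, by omega⟩, ?_, rfl⟩⟩
    simp [Fin.lt_def]
  exact Nat.sInf_mem hne

lemma kmin_pos {m n : ℕ} (hn : 2 ≤ n) (D : Fin n → Run m) (hD : Function.Injective D) :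
    1 ≤ kmin D := by
  obtain ⟨i, j, hij, hk⟩ := kmin_mem hn D
  rw [← hk]
  exact kendall_pos fun hh => (ne_of_lt hij) (hD hh)

noncomputable def ED {m n : ℕ} (D : Fin n → Run m) (σ : Equiv.Perm (Fin n)) : ℕ :=
  ∑ i, kendall (D (σ i)) (D i)

lemma ED_one {m n : ℕ} (D : Fin n → Run m) : ED D 1 = 0 := by
  simp [ED, kendall_self]

lemma ED_swap {m n : ℕ} (D : Fin n → Run m) {i j : Fin n} (h : i ≠ j) :
    ED D (Equiv.swap i j) = 2 * kendall (D i) (D j) := by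
  rw [ED, ← Finset.sum_subset (Finset.subset_univ ({i, j} : Finset (Fin n)))]
  · rw [Finset.sum_pair h, Equiv.swap_apply_left, Equiv.swap_apply_right,
      kendall_comm (D j) (D i), two_mul]
  · intro x _ hx
    simp only [Finset.mem_insert, Finset.mem_singleton, not_or] at hx
    rw [Equiv.swap_apply_of_ne_of_ne hx.1 hx.2, kendall_self]

lemma le_ED {m n : ℕ} {D : Fin n → Run m} {k : ℕ}
    (hlb : ∀ i j : Fin n, i ≠ j → k ≤ kendall (D i) (D j))
    {σ : Equiv.Perm (Fin n)} (hσ : σ ≠ 1) : 2 * k ≤ ED D σ := by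
  obtain ⟨i, hi⟩ : ∃ i, σ i ≠ i := by
    by_contra hc
    push_neg at hc
    exact hσ (Equiv.ext hc)
  have hsi : σ (σ i) ≠ σ i := fun hh => hi (σ.injective hh)
  have hsub : ({i, σ i} : Finset (Fin n)) ⊆ Finset.univ := Finset.subset_univ _
  calc 2 * k = ∑ _x ∈ ({i, σ i} : Finset (Fin n)), k := by
        rw [Finset.sum_const, Finset.card_pair (Ne.symm hi), smul_eq_mul]
    _ ≤ ∑ x ∈ ({i, σ i} : Finset (Fin n)), kendall (D (σ x)) (D x) := by
        apply Finset.sum_le_sum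
        intro x hx
        simp only [Finset.mem_insert, Finset.mem_singleton] at hx
        rcases hx with rfl | rfl
        · exact hlb _ _ hi
        · exact hlb _ _ hsi
    _ ≤ ED D σ := Finset.sum_le_sum_of_subset hsub

open scoped Classical in
lemma ED_eq_swap {m n : ℕ} {D : Fin n → Run m} {k : ℕ} (hk : 1 ≤ k)
    (hlb : ∀ i j : Fin n, i ≠ j → k ≤ kendall (D i) (D j))
    {σ : Equiv.Perm (Fin n)} (hσ : σ ≠ 1) (hE : ED D σ = 2 * k) :
    ∃ i j : Fin n, i < j ∧ σ = Equiv.swap i j ∧ kendall (D i) (D j) = k := by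
  classical
  set M : Finset (Fin n) := Finset.univ.filter (fun i : Fin n => σ i ≠ i) with hM
  have hmem : ∀ x, x ∈ M ↔ σ x ≠ x := by
    intro x; simp [hM]
  have hEM : ED D σ = ∑ x ∈ M, kendall (D (σ x)) (D x) := by
    rw [ED, ← Finset.sum_subset (Finset.subset_univ M)]
    intro x _ hx
    rw [hmem] at hx
    push_neg at hx
    rw [hx, kendall_self]
  have hcard_le : M.card * k ≤ 2 * k := by
    rw [← hE, hEM]
    calc M.card * k = ∑ _x ∈ M, k := by rw [Finset.sum_const, smul_eq_mul]
      _ ≤ _ := Finset.sum_le_sum fun x hx => hlb _ _ ((hmem x).1 hx)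
  have hcard2 : M.card ≤ 2 := by
    by_contra hc
    push_neg at hc
    nlinarith
  have hge : 2 ≤ M.card := by
    obtain ⟨i, hi⟩ : ∃ i, σ i ≠ i := by
      by_contra hc
      push_neg at hc
      exact hσ (Equiv.ext hc)
    have h1 : i ∈ M := (hmem i).2 hi
    have h2 : σ i ∈ M := (hmem (σ i)).2 fun hh => hi (σ.injective hh)
    calc 2 = ({i, σ i} : Finset (Fin n)).card := (Finset.card_pair (Ne.symm hi)).symm
      _ ≤ M.card := Finset.card_le_card (by
          intro x hx
          simp only [Finset.mem_insert, Finset.mem_singleton] at hx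
          rcases hx with rfl | rfl <;> assumption)
  have hcard : M.card = 2 := le_antisymm hcard2 hge
  obtain ⟨a, b, hab, hMab⟩ := Finset.card_eq_two.1 hcard
  -- σ a = b, σ b = a
  have haM : a ∈ M := by rw [hMab]; simp
  have hbM : b ∈ M := by rw [hMab]; simp
  have hsa : σ a ≠ a := (hmem a).1 haM
  have hsb : σ b ≠ b := (hmem b).1 hbM
  have hsaM : σ a ∈ M := (hmem (σ a)).2 fun hh => hsa (σ.injective hh)
  have hsbM : σ b ∈ M := (hmem (σ b)).2 fun hh => hsb (σ.injective hh)
  have hσa : σ a = b := by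
    rw [hMab] at hsaM
    simp only [Finset.mem_insert, Finset.mem_singleton] at hsaM
    tauto
  have hσb : σ b = a := by
    rw [hMab] at hsbM
    simp only [Finset.mem_insert, Finset.mem_singleton] at hsbM
    tauto
  have hswap : σ = Equiv.swap a b := by
    apply Equiv.ext
    intro x
    by_cases hxa : x = a
    · subst hxa; rw [hσa, Equiv.swap_apply_left]
    by_cases hxb : x = b
    · subst hxb; rw [hσb, Equiv.swap_apply_right]
    · rw [Equiv.swap_apply_of_ne_of_ne hxa hxb]
      by_contra hc
      have : x ∈ M := (hmem x).2 hc
      rw [hMab] at this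
      simp only [Finset.mem_insert, Finset.mem_singleton] at this
      tauto
  have hkab : kendall (D a) (D b) = k := by
    have := hE
    rw [hswap, ED_swap D hab] at this
    omega
  rcases hab.lt_or_gt with h | h
  · exact ⟨a, b, h, hswap, hkab⟩
  · exact ⟨b, a, h, by rw [hswap, Equiv.swap_comm], by rw [kendall_comm]; exact hkab⟩

lemma det_SigmaMat {m n : ℕ} (D : Fin n → Run m) (θ : ℝ) :
    (SigmaMat D θ).det = ∑ σ : Equiv.Perm (Fin n),
      ((Equiv.Perm.sign σ : ℤ) : ℝ) * Real.exp (-θ * (ED D σ : ℝ)) := by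
  rw [Matrix.det_apply']
  apply Finset.sum_congr rfl
  intro σ _
  congr 1
  simp only [SigmaMat]
  rw [← Real.exp_sum]
  congr 1
  rw [ED, Nat.cast_sum, Finset.mul_sum]

open scoped Classical in
lemma sum_sign_eq {m n : ℕ} {D : Fin n → Run m} {k : ℕ} (hk : 1 ≤ k)
    (hlb : ∀ i j : Fin n, i ≠ j → k ≤ kendall (D i) (D j)) :
    ∑ σ : Equiv.Perm (Fin n), ((Equiv.Perm.sign σ : ℤ) : ℝ) *
      (if ED D σ = 2 * k then (1 : ℝ) else 0) = -(nuDist D k : ℝ) := by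
  classical
  have h1 : ∑ σ : Equiv.Perm (Fin n), ((Equiv.Perm.sign σ : ℤ) : ℝ) *
      (if ED D σ = 2 * k then (1 : ℝ) else 0)
      = ∑ σ ∈ Finset.univ.filter (fun σ : Equiv.Perm (Fin n) => ED D σ = 2 * k),
          ((Equiv.Perm.sign σ : ℤ) : ℝ) := by
    rw [Finset.sum_filter]
    apply Finset.sum_congr rfl
    intro σ _
    by_cases h : ED D σ = 2 * k <;> simp [h]
  rw [h1]
  set S := Finset.univ.filter (fun σ : Equiv.Perm (Fin n) => ED D σ = 2 * k) with hS
  set P := Finset.univ.filter (fun p : Fin n × Fin n =>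
    p.1 < p.2 ∧ kendall (D p.1) (D p.2) = k) with hP
  have hne_one : ∀ σ ∈ S, σ ≠ 1 := by
    intro σ hσ h1'
    rw [hS, Finset.mem_filter] at hσ
    rw [h1', ED_one] at hσ
    omega
  have himg : S = P.image (fun p : Fin n × Fin n => Equiv.swap p.1 p.2) := by
    apply Finset.ext
    intro σ
    constructor
    · intro hσ
      have hE : ED D σ = 2 * k := (Finset.mem_filter.1 hσ).2
      obtain ⟨i, j, hij, hsw, hkk⟩ := ED_eq_swap hk hlb (hne_one σ hσ) hE
      refine Finset.mem_image.2 ⟨(i, j), ?_, hsw.symm⟩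
      rw [hP, Finset.mem_filter]
      exact ⟨Finset.mem_univ _, hij, hkk⟩
    · intro hσ
      obtain ⟨p, hp, hps⟩ := Finset.mem_image.1 hσ
      rw [hP, Finset.mem_filter] at hp
      obtain ⟨-, hlt, hkk⟩ := hp
      rw [hS, Finset.mem_filter]
      refine ⟨Finset.mem_univ _, ?_⟩
      rw [← hps, ED_swap D (ne_of_lt hlt), hkk]
  have hinj : Set.InjOn (fun p : Fin n × Fin n => Equiv.swap p.1 p.2) P := by
    intro p hp q hq hpq
    rw [hP, Finset.coe_filter] at hp hq
    obtain ⟨-, hp1, -⟩ := hp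
    obtain ⟨-, hq1, -⟩ := hq
    simp only at hpq
    have h1' := congrArg (fun e : Equiv.Perm (Fin n) => e q.1) hpq
    simp only [Equiv.swap_apply_left] at h1'
    -- h1' : swap p.1 p.2 q.1 = q.2
    by_cases hq1p1 : q.1 = p.1
    · have : q.2 = p.2 := by
        rw [hq1p1, Equiv.swap_apply_left] at h1'
        exact h1'.symm
      exact Prod.ext hq1p1.symm this.symm ▸ rfl
    · by_cases hq1p2 : q.1 = p.2
      · rw [hq1p2, Equiv.swap_apply_right] at h1'
        exfalso
        rw [hq1p2] at hq1
        rw [← h1'] at hq1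
        exact absurd (hp1.trans hq1) (lt_irrefl _)
      · rw [Equiv.swap_apply_of_ne_of_ne hq1p1 hq1p2] at h1'
        exfalso
        rw [← h1'] at hq1
        exact absurd hq1 (lt_irrefl _)
  have hsign : ∀ σ ∈ S, ((Equiv.Perm.sign σ : ℤ) : ℝ) = -1 := by
    intro σ hσ
    have hE : ED D σ = 2 * k := (Finset.mem_filter.1 hσ).2
    obtain ⟨i, j, hij, hsw, -⟩ := ED_eq_swap hk hlb (hne_one σ hσ) hE
    rw [hsw, Equiv.Perm.sign_swap (ne_of_lt hij)]
    norm_num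
  rw [Finset.sum_congr rfl hsign, Finset.sum_const, himg,
    Finset.card_image_of_injOn hinj]
  have : nuDist D k = P.card := rfl
  rw [this]
  simp [mul_comm]

open Filter in
lemma tendsto_exp_mul_nonpos {c : ℝ} (hc : c ≤ 0) :
    Tendsto (fun θ : ℝ => Real.exp (θ * c)) atTop
      (nhds (if c = 0 then 1 else 0)) := by
  rcases eq_or_lt_of_le hc with h0 | h0
  · rw [if_pos h0]
    simp only [h0, mul_zero, Real.exp_zero]
    exact tendsto_const_nhds
  · rw [if_neg (ne_of_lt h0)]
    have h1 : Tendsto (fun θ : ℝ => θ * c) atTop atBot :=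
      Tendsto.atTop_mul_const_of_neg h0 tendsto_id
    exact Real.tendsto_exp_atBot.comp h1

open Filter in
/-- A maximin Kendall tau distance design with the fewest closest pairs is asymptotically
D-optimal under the Gaussian process model with the Mallows kernel. -/
theorem stmt11 {m n : ℕ} (hm : 2 ≤ m) (hn : 2 ≤ n)
    (Dstar : Fin n → Run m) (hstar : Function.Injective Dstar)
    (hmaximin : ∀ D : Fin n → Run m, Function.Injective D → kmin D ≤ kmin Dstar)
    (hnu : ∀ D : Fin n → Run m, Function.Injective D → kmin D = kmin Dstar →
      nuDist Dstar (kmin Dstar) ≤ nuDist D (kmin Dstar))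
    (D : Fin n → Run m) (hD : Function.Injective D)
    (hcond : kmin D < kmin Dstar ∨
      (kmin D = kmin Dstar ∧ nuDist Dstar (kmin Dstar) < nuDist D (kmin Dstar))) :
    ∃ θ₀ : ℝ, 0 < θ₀ ∧ ∀ θ : ℝ, θ₀ ≤ θ →
      (SigmaMat Dstar θ).det > (SigmaMat D θ).det := by
  classical
  set k := kmin D with hkdef
  have hk1 : 1 ≤ k := kmin_pos hn D hD
  have hkk : k ≤ kmin Dstar := hmaximin D hD
  have hlbD : ∀ i j : Fin n, i ≠ j → k ≤ kendall (D i) (D j) := fun i j h => kmin_le D h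
  have hlbS : ∀ i j : Fin n, i ≠ j → k ≤ kendall (Dstar i) (Dstar j) :=
    fun i j h => le_trans hkk (kmin_le Dstar h)
  set L : ℝ := (nuDist D k : ℝ) - (nuDist Dstar k : ℝ) with hLdef
  have hL : 0 < L := by
    rcases hcond with h | ⟨h1, h2⟩
    · have hz : nuDist Dstar k = 0 := by
        rw [nuDist, Finset.card_eq_zero, Finset.filter_eq_empty_iff]
        rintro p - ⟨hp1, hp2⟩
        have h3 : kmin Dstar ≤ kendall (Dstar p.1) (Dstar p.2) :=
          kmin_le Dstar (ne_of_lt hp1)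
        omega
      have hpos : 1 ≤ nuDist D k := by
        obtain ⟨i, j, hij, hke⟩ := kmin_mem hn D
        rw [nuDist, Nat.one_le_iff_ne_zero, ← Nat.pos_iff_ne_zero, Finset.card_pos]
        exact ⟨(i, j), Finset.mem_filter.2 ⟨Finset.mem_univ _, hij, hke⟩⟩
      rw [hLdef, hz]
      have : (1 : ℝ) ≤ (nuDist D k : ℝ) := by exact_mod_cast hpos
      push_cast
      linarith
    · rw [hLdef]
      have h2' : nuDist Dstar k < nuDist D k := by rw [h1]; exact h2
      have : (nuDist Dstar k : ℝ) < (nuDist D k : ℝ) := by exact_mod_cast h2'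
      linarith
  -- per-σ limit value
  set ell : Equiv.Perm (Fin n) → ℝ := fun σ => ((Equiv.Perm.sign σ : ℤ) : ℝ) *
    ((if ED Dstar σ = 2 * k then (1 : ℝ) else 0) -
      (if ED D σ = 2 * k then (1 : ℝ) else 0)) with helldef
  have hsum_ell : ∑ σ : Equiv.Perm (Fin n), ell σ = L := by
    rw [helldef]
    simp only [mul_sub]
    rw [Finset.sum_sub_distrib, sum_sign_eq hk1 hlbS, sum_sign_eq hk1 hlbD, hLdef]
    ring
  -- algebraic identity
  have key : ∀ θ : ℝ, ((SigmaMat Dstar θ).det - (SigmaMat D θ).det) *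
      Real.exp (θ * ((2 * k : ℕ) : ℝ)) =
      ∑ σ : Equiv.Perm (Fin n), ((Equiv.Perm.sign σ : ℤ) : ℝ) *
        (Real.exp (θ * (((2 * k : ℕ) : ℝ) - (ED Dstar σ : ℝ))) -
          Real.exp (θ * (((2 * k : ℕ) : ℝ) - (ED D σ : ℝ)))) := by
    intro θ
    rw [det_SigmaMat, det_SigmaMat, ← Finset.sum_sub_distrib, Finset.sum_mul]
    apply Finset.sum_congr rfl
    intro σ _
    have hmul : ∀ E : ℕ, Real.exp (-θ * (E : ℝ)) * Real.exp (θ * ((2 * k : ℕ) : ℝ)) =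
        Real.exp (θ * (((2 * k : ℕ) : ℝ) - (E : ℝ))) := by
      intro E
      rw [← Real.exp_add]
      congr 1
      ring
    rw [sub_mul, mul_assoc, mul_assoc, hmul, hmul, ← mul_sub]
  -- per-exp tendsto helper
  have hconv : ∀ E : ℕ, 2 * k ≤ E →
      Tendsto (fun θ : ℝ => Real.exp (θ * (((2 * k : ℕ) : ℝ) - (E : ℝ)))) atTop
        (nhds (if E = 2 * k then (1 : ℝ) else 0)) := by
    intro E hE
    have hc : ((2 * k : ℕ) : ℝ) - (E : ℝ) ≤ 0 :=
      sub_nonpos.2 (Nat.cast_le.2 hE)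
    have hiff : (((2 * k : ℕ) : ℝ) - (E : ℝ) = 0) ↔ E = 2 * k := by
      rw [sub_eq_zero]
      exact_mod_cast eq_comm
    have := tendsto_exp_mul_nonpos hc
    rwa [if_congr hiff rfl rfl] at this
  have hTend : Tendsto (fun θ : ℝ => ((SigmaMat Dstar θ).det - (SigmaMat D θ).det) *
      Real.exp (θ * ((2 * k : ℕ) : ℝ))) atTop (nhds L) := by
    rw [← hsum_ell]
    apply Tendsto.congr (fun θ => (key θ).symm)
    apply tendsto_finset_sum
    intro σ _
    by_cases hσ : σ = 1
    · subst hσ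
      have hfun : (fun θ : ℝ => ((Equiv.Perm.sign (1 : Equiv.Perm (Fin n)) : ℤ) : ℝ) *
          (Real.exp (θ * (((2 * k : ℕ) : ℝ) - (ED Dstar 1 : ℝ))) -
            Real.exp (θ * (((2 * k : ℕ) : ℝ) - (ED D 1 : ℝ))))) = fun _ => 0 := by
        funext θ
        rw [ED_one, ED_one, sub_self, mul_zero]
      rw [hfun, helldef]
      have h2k : ¬ (ED Dstar (1 : Equiv.Perm (Fin n)) = 2 * k) := by
        rw [ED_one]; omega
      have h2k' : ¬ (ED D (1 : Equiv.Perm (Fin n)) = 2 * k) := by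
        rw [ED_one]; omega
      simp only [if_neg h2k, if_neg h2k', sub_self, mul_zero]
      exact tendsto_const_nhds
    · rw [helldef]
      exact ((hconv _ (le_ED hlbS hσ)).sub (hconv _ (le_ED hlbD hσ))).const_mul _
  -- conclude
  have hev : ∀ᶠ θ : ℝ in atTop, 0 < ((SigmaMat Dstar θ).det - (SigmaMat D θ).det) *
      Real.exp (θ * ((2 * k : ℕ) : ℝ)) := hTend.eventually (eventually_gt_nhds hL)
  obtain ⟨a, ha⟩ := eventually_atTop.1 hev
  refine ⟨max a 1, lt_of_lt_of_le one_pos (le_max_right a 1), ?_⟩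
  intro θ hθ
  have h1 := ha θ (le_trans (le_max_left a 1) hθ)
  have h2 : (0 : ℝ) < Real.exp (θ * ((2 * k : ℕ) : ℝ)) := Real.exp_pos _
  have h3 : 0 < (SigmaMat Dstar θ).det - (SigmaMat D θ).det := by
    by_contra hc
    push_neg at hc
    exact absurd h1 (not_lt.2 (mul_nonpos_of_nonpos_of_nonneg hc (le_of_lt h2)))
  linarith
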